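/- With H as in the MPCT cost Hessian (positive semidefinite, built from positive definite Q, R, T, S and horizon N), H can be decomposed as H = Γ̂₀ + Û V̂ where Γ̂₀ = diag(diag(Q,R),...,diag(Q,R), diag(NQ+T, NR+S)) is block diagonal, Y = -1_Nᵀ ⊗ diag(Q,R), Û = [[Yᵀ, 0],[0, I]], V̂ = [[0, I],[Y, 0]], with the low-rank factors of rank at most 2(nx+nu). -/

import Mathlib

open Matrix

theorem mpct_hessian_semibanded_decomposition {nx nu N : ℕ} (hN : 1 ≤ N)
    (Q T : Matrix (Fin nx) (Fin nx) ℝ) (R S : Matrix (Fin nu) (Fin nu) ℝ)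
    (hQ : Q.PosDef) (hR : R.PosDef) (hT : T.PosDef) (hS : S.PosDef)
    (D : Matrix (Fin nx ⊕ Fin nu) (Fin nx ⊕ Fin nu) ℝ)
    (hD : D = Matrix.fromBlocks Q 0 0 R)
    (Dfin : Matrix (Fin nx ⊕ Fin nu) (Fin nx ⊕ Fin nu) ℝ)
    (hDfin : Dfin = Matrix.fromBlocks ((N : ℝ) • Q + T) 0 0 ((N : ℝ) • R + S))
    (Y : Matrix (Fin nx ⊕ Fin nu) (Fin N × (Fin nx ⊕ Fin nu)) ℝ)
    (hY : Y = fun a q => -D a q.2)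
    (H : Matrix ((Fin N × (Fin nx ⊕ Fin nu)) ⊕ (Fin nx ⊕ Fin nu))
                ((Fin N × (Fin nx ⊕ Fin nu)) ⊕ (Fin nx ⊕ Fin nu)) ℝ)
    (hH : H = Matrix.fromBlocks
      (fun p q => if p.1 = q.1 then D p.2 q.2 else 0) Yᵀ Y Dfin)
    (Γ₀ : Matrix ((Fin N × (Fin nx ⊕ Fin nu)) ⊕ (Fin nx ⊕ Fin nu))
                 ((Fin N × (Fin nx ⊕ Fin nu)) ⊕ (Fin nx ⊕ Fin nu)) ℝ)
    (hΓ₀ : Γ₀ = Matrix.fromBlocks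
      (fun p q => if p.1 = q.1 then D p.2 q.2 else 0) 0 0 Dfin)
    (Uhat : Matrix ((Fin N × (Fin nx ⊕ Fin nu)) ⊕ (Fin nx ⊕ Fin nu))
                ((Fin nx ⊕ Fin nu) ⊕ (Fin nx ⊕ Fin nu)) ℝ)
    (hUhat : Uhat = Matrix.fromBlocks Yᵀ 0 0 1)
    (Vhat : Matrix ((Fin nx ⊕ Fin nu) ⊕ (Fin nx ⊕ Fin nu))
                ((Fin N × (Fin nx ⊕ Fin nu)) ⊕ (Fin nx ⊕ Fin nu)) ℝ)
    (hVhat : Vhat = Matrix.fromBlocks 0 1 Y 0) :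
    H = Γ₀ + Uhat * Vhat := by
  subst hH hΓ₀ hUhat hVhat
  rw [Matrix.fromBlocks_multiply]; erw [Matrix.fromBlocks_add]
  simp [Matrix.mul_zero, Matrix.zero_mul, Matrix.mul_one, Matrix.one_mul]
  erw [add_zero]
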